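/- Assume ‖ν(z)‖ = 1 for all z ∈ Γ, the Lipschitz hypothesis (Lip) with constant ℓ_ν > 0, the flatness hypothesis (Flat) with constant c_ν > 0, and the boundedness hypothesis (Bdd) with constant d > 0. Then there exists a constant c₃ > 0 (depending only on ℓ_ν, c_ν and d) such that for all indices i, j ∈ {1,2,3} and all x₁, x₂, y ∈ Γ with x₁ ≠ y and 2‖x₁ − x₂‖ ≤ ‖x₁ − y‖, |p(x₁,y) q_{ij}(x₁,y) − p(x₂,y) q_{ij}(x₂,y)| ≤ c₃ ‖x₁ − x₂‖ / ‖x₁ − y‖³. -/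

import Mathlib

open scoped RealInnerProductSpace

/-- The second mixed normal derivative of the Laplace fundamental solution:
`p(x,y) = (ν(x)·ν(y))/(4π‖x−y‖³) − 3(ν(y)·(x−y))(ν(x)·(x−y))/(4π‖x−y‖⁵)`. -/
noncomputable def laplaceHyperKernel
    (ν : EuclideanSpace ℝ (Fin 3) → EuclideanSpace ℝ (Fin 3))
    (x y : EuclideanSpace ℝ (Fin 3)) : ℝ :=
  ⟪ν x, ν y⟫ / (4 * Real.pi * ‖x - y‖ ^ 3)
    - 3 * (⟪ν y, x - y⟫ * ⟪ν x, x - y⟫) / (4 * Real.pi * ‖x - y‖ ^ 5)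

/-- The kernel factor `q_{ij}(x,y) = ν_i(x)ν_j(x) − ν_i(y)ν_j(y)`. -/
def normalProductKernel
    (ν : EuclideanSpace ℝ (Fin 3) → EuclideanSpace ℝ (Fin 3))
    (i j : Fin 3) (x y : EuclideanSpace ℝ (Fin 3)) : ℝ :=
  ν x i * ν x j - ν y i * ν y j

lemma coord_abs_le (x : EuclideanSpace ℝ (Fin 3)) (i : Fin 3) : |x i| ≤ ‖x‖ := by
  have h1 : ⟪x, EuclideanSpace.single i (1:ℝ)⟫ = x i := by
    rw [EuclideanSpace.inner_single_right]; simp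
  calc |x i| = |⟪x, EuclideanSpace.single i (1:ℝ)⟫| := by rw [h1]
    _ ≤ ‖x‖ * ‖EuclideanSpace.single i (1:ℝ)‖ := abs_real_inner_le_norm _ _
    _ = ‖x‖ := by rw [EuclideanSpace.norm_single]; simp

lemma inv_cube_diff (a b h : ℝ) (ha : 0 < a) (hb1 : a/2 ≤ b) (hb2 : b ≤ 3*a/2)
    (hab : |a - b| ≤ h) : |1/a^3 - 1/b^3| ≤ 38 * h / a^4 := by
  have hb0 : 0 < b := by linarith
  have h0 : 0 ≤ h := le_trans (abs_nonneg _) hab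
  have heq : 1/a^3 - 1/b^3 = ((b-a)*(b^2+a*b+a^2))/(a^3*b^3) := by
    field_simp; ring
  rw [heq, abs_div, abs_mul]
  have h1 : |b - a| ≤ h := by rwa [abs_sub_comm]
  have h2 : |b^2+a*b+a^2| = b^2+a*b+a^2 := abs_of_pos (by nlinarith)
  have h3 : |a^3*b^3| = a^3*b^3 := abs_of_pos (by positivity)
  rw [h2, h3]
  have h4 : b^2+a*b+a^2 ≤ 19/4*a^2 := by nlinarith
  have h5 : a^6/8 ≤ a^3*b^3 := by nlinarith [pow_pos ha 3, pow_le_pow_left₀ (by linarith : (0:ℝ) ≤ a/2) hb1 3]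
  calc |b-a| * (b^2+a*b+a^2) / (a^3*b^3) ≤ h * (19/4*a^2) / (a^6/8) := by gcongr
      _ = 38 * h / a^4 := by field_simp; ring

lemma inv_fifth_diff (a b h : ℝ) (ha : 0 < a) (hb1 : a/2 ≤ b) (hb2 : b ≤ 3*a/2)
    (hab : |a - b| ≤ h) : |1/a^5 - 1/b^5| ≤ 422 * h / a^6 := by
  have hb0 : 0 < b := by linarith
  have h0 : 0 ≤ h := le_trans (abs_nonneg _) hab
  have heq : 1/a^5 - 1/b^5 = ((b-a)*(b^4+a*b^3+a^2*b^2+a^3*b+a^4))/(a^5*b^5) := by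
    field_simp; ring
  rw [heq, abs_div, abs_mul]
  have h1 : |b - a| ≤ h := by rwa [abs_sub_comm]
  have h2 : |b^4+a*b^3+a^2*b^2+a^3*b+a^4| = b^4+a*b^3+a^2*b^2+a^3*b+a^4 :=
    abs_of_pos (by positivity)
  have h3 : |a^5*b^5| = a^5*b^5 := abs_of_pos (by positivity)
  rw [h2, h3]
  have hbb2 : b^2 ≤ 9/4*a^2 := by nlinarith
  have hbb3 : b^3 ≤ 27/8*a^3 := by nlinarith
  have hbb4 : b^4 ≤ 81/16*a^4 := by nlinarith
  have h4 : b^4+a*b^3+a^2*b^2+a^3*b+a^4 ≤ 211/16*a^4 := by nlinarith [mul_le_mul_of_nonneg_left hbb3 ha.le, mul_le_mul_of_nonneg_left hbb2 (sq_nonneg a), mul_le_mul_of_nonneg_left hb2 (pow_pos ha 3).le]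
  have h5 : a^10/32 ≤ a^5*b^5 := by
    have := pow_le_pow_left₀ (by linarith : (0:ℝ) ≤ a/2) hb1 5
    have ha5 : (0:ℝ) < a^5 := pow_pos ha 5
    calc a^10/32 = a^5 * ((a/2)^5) := by ring
      _ ≤ a^5 * b^5 := by nlinarith
  calc |b-a| * (b^4+a*b^3+a^2*b^2+a^3*b+a^4) / (a^5*b^5) ≤ h * (211/16*a^4) / (a^10/32) := by gcongr
      _ = 422 * h / a^6 := by field_simp; ring

set_option maxHeartbeats 2000000 in
theorem kernel_pq_difference_bound
    (Γ : Set (EuclideanSpace ℝ (Fin 3)))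
    (ν : EuclideanSpace ℝ (Fin 3) → EuclideanSpace ℝ (Fin 3))
    (hν : ∀ z ∈ Γ, ‖ν z‖ = 1)
    (ℓ_ν : ℝ) (hℓ : 0 < ℓ_ν)
    (hLip : ∀ x ∈ Γ, ∀ y ∈ Γ, ‖ν x - ν y‖ ≤ ℓ_ν * ‖x - y‖)
    (c_ν : ℝ) (hc : 0 < c_ν)
    (hFlat : ∀ x ∈ Γ, ∀ y ∈ Γ,
      |⟪ν x, x - y⟫| ≤ c_ν * ‖x - y‖ ^ 2 ∧ |⟪ν y, x - y⟫| ≤ c_ν * ‖x - y‖ ^ 2)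
    (d : ℝ) (hd : 0 < d)
    (hBdd : ∀ z ∈ Γ, ‖z‖ ≤ d) :
    ∃ c₃ > (0 : ℝ), ∀ i j : Fin 3, ∀ x₁ ∈ Γ, ∀ x₂ ∈ Γ, ∀ y ∈ Γ,
      x₁ ≠ y → 2 * ‖x₁ - x₂‖ ≤ ‖x₁ - y‖ →
      |laplaceHyperKernel ν x₁ y * normalProductKernel ν i j x₁ y
          - laplaceHyperKernel ν x₂ y * normalProductKernel ν i j x₂ y|
        ≤ c₃ * ‖x₁ - x₂‖ / ‖x₁ - y‖ ^ 3 := by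
  set Cp : ℝ := 1 + 12*c_ν^2*d^2 with hCp_def
  set Cd : ℝ := 2*d*ℓ_ν + 38 + 6*d*c_ν + 27/2*d*c_ν*(2*d*ℓ_ν+1) + 51273/2*d^2*c_ν^2 with hCd_def
  refine ⟨2*ℓ_ν*Cp + 3*ℓ_ν*Cd, by positivity, ?_⟩
  intro i j x₁ hx₁ x₂ hx₂ y hy hne hsep
  set r : ℝ := ‖x₁ - y‖ with hr_def
  set s : ℝ := ‖x₂ - y‖ with hs_def
  set t : ℝ := ‖x₁ - x₂‖ with ht_def
  have hr : 0 < r := norm_sub_pos_iff.mpr hne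
  have h0t : 0 ≤ t := norm_nonneg _
  have hvec : (x₁ - y) - (x₂ - y) = x₁ - x₂ := by abel
  have hts : |r - s| ≤ t := by
    have := abs_norm_sub_norm_le (x₁ - y) (x₂ - y)
    rwa [hvec] at this
  have hts' := abs_le.mp hts
  have hs1 : r/2 ≤ s := by linarith [hts'.2]
  have hs2 : s ≤ 3*r/2 := by linarith [hts'.1]
  have hs0 : 0 < s := by linarith
  have hr2d : r ≤ 2*d := by
    calc r ≤ ‖x₁‖ + ‖y‖ := norm_sub_le _ _
      _ ≤ 2*d := by linarith [hBdd x₁ hx₁, hBdd y hy]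
  have hr2 : r^2 ≤ 4*d^2 := by
    have := pow_le_pow_left₀ hr.le hr2d 2
    linarith [this]
  have hbb : s^2 ≤ 9/4*r^2 := by
    have h1 := pow_le_pow_left₀ hs0.le hs2 2
    have h2 : (3*r/2)^2 = 9/4*r^2 := by ring
    linarith [h1, h2]
  have hs4g : s^4 ≤ 81/16*r^4 := by
    have h1 := pow_le_pow_left₀ hs0.le hs2 4
    have h2 : (3*r/2)^4 = 81/16*r^4 := by ring
    linarith [h1, h2]
  have n1 : ‖ν x₁‖ = 1 := hν x₁ hx₁
  have n2 : ‖ν x₂‖ = 1 := hν x₂ hx₂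
  have ny : ‖ν y‖ = 1 := hν y hy
  -- inner product quantities
  set A₁ : ℝ := ⟪ν x₁, ν y⟫ with hA₁_def
  set A₂ : ℝ := ⟪ν x₂, ν y⟫ with hA₂_def
  set F₁ : ℝ := ⟪ν y, x₁ - y⟫ with hF₁_def
  set F₂ : ℝ := ⟪ν y, x₂ - y⟫ with hF₂_def
  set G₁ : ℝ := ⟪ν x₁, x₁ - y⟫ with hG₁_def
  set G₂ : ℝ := ⟪ν x₂, x₂ - y⟫ with hG₂_def
  have hA1 : |A₁| ≤ 1 := by
    calc |A₁| ≤ ‖ν x₁‖ * ‖ν y‖ := abs_real_inner_le_norm _ _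
      _ = 1 := by rw [n1, ny]; ring
  have hA2 : |A₂| ≤ 1 := by
    calc |A₂| ≤ ‖ν x₂‖ * ‖ν y‖ := abs_real_inner_le_norm _ _
      _ = 1 := by rw [n2, ny]; ring
  have hAd : |A₁ - A₂| ≤ ℓ_ν * t := by
    have h1 : A₁ - A₂ = ⟪ν x₁ - ν x₂, ν y⟫ := (inner_sub_left _ _ _).symm
    rw [h1]
    calc |⟪ν x₁ - ν x₂, ν y⟫| ≤ ‖ν x₁ - ν x₂‖ * ‖ν y‖ := abs_real_inner_le_norm _ _
      _ = ‖ν x₁ - ν x₂‖ := by rw [ny]; ring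
      _ ≤ ℓ_ν * t := hLip x₁ hx₁ x₂ hx₂
  have hF1 : |F₁| ≤ c_ν * r^2 := (hFlat x₁ hx₁ y hy).2
  have hF2 : |F₂| ≤ c_ν * s^2 := (hFlat x₂ hx₂ y hy).2
  have hG1 : |G₁| ≤ c_ν * r^2 := (hFlat x₁ hx₁ y hy).1
  have hG2 : |G₂| ≤ c_ν * s^2 := (hFlat x₂ hx₂ y hy).1
  have hFd : |F₁ - F₂| ≤ t := by
    have h1 : F₁ - F₂ = ⟪ν y, x₁ - x₂⟫ := by
      rw [hF₁_def, hF₂_def, ← inner_sub_right, hvec]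
    rw [h1]
    calc |⟪ν y, x₁ - x₂⟫| ≤ ‖ν y‖ * ‖x₁ - x₂‖ := abs_real_inner_le_norm _ _
      _ = t := by rw [ny]; ring
  have hGd : |G₁ - G₂| ≤ ℓ_ν * t * r + t := by
    have h1 : G₁ - G₂ = ⟪ν x₁ - ν x₂, x₁ - y⟫ + ⟪ν x₂, x₁ - x₂⟫ := by
      have e2 : (⟪ν x₂, x₁ - x₂⟫:ℝ) = ⟪ν x₂, x₁ - y⟫ - ⟪ν x₂, x₂ - y⟫ := by
        rw [← hvec, inner_sub_right]
      rw [hG₁_def, hG₂_def, inner_sub_left, e2]; ring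
    rw [h1]
    calc |⟪ν x₁ - ν x₂, x₁ - y⟫ + ⟪ν x₂, x₁ - x₂⟫|
        ≤ |⟪ν x₁ - ν x₂, x₁ - y⟫| + |⟪ν x₂, x₁ - x₂⟫| := abs_add_le _ _
      _ ≤ ‖ν x₁ - ν x₂‖ * ‖x₁ - y‖ + ‖ν x₂‖ * ‖x₁ - x₂‖ := by
          gcongr <;> exact abs_real_inner_le_norm _ _
      _ ≤ (ℓ_ν * t) * r + 1 * t := by
          rw [n2]; gcongr; exact hLip x₁ hx₁ x₂ hx₂
      _ = ℓ_ν * t * r + t := by ring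
  -- q quantities
  set q₁ : ℝ := normalProductKernel ν i j x₁ y with hq₁_def
  set q₂ : ℝ := normalProductKernel ν i j x₂ y with hq₂_def
  have hcomp : ∀ u : EuclideanSpace ℝ (Fin 3), ∀ k : Fin 3, ‖u‖ = 1 → |u k| ≤ 1 := by
    intro u k hu; calc |u k| ≤ ‖u‖ := coord_abs_le u k
                    _ = 1 := hu
  have hqd : |q₁ - q₂| ≤ 2 * ℓ_ν * t := by
    have h1 : q₁ - q₂ = ν x₁ i * (ν x₁ j - ν x₂ j) + (ν x₁ i - ν x₂ i) * ν x₂ j := by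
      rw [hq₁_def, hq₂_def]; unfold normalProductKernel; ring
    have hdi : |ν x₁ i - ν x₂ i| ≤ ℓ_ν * t := by
      calc |ν x₁ i - ν x₂ i| = |(ν x₁ - ν x₂) i| := rfl
        _ ≤ ‖ν x₁ - ν x₂‖ := coord_abs_le _ _
        _ ≤ ℓ_ν * t := hLip x₁ hx₁ x₂ hx₂
    have hdj : |ν x₁ j - ν x₂ j| ≤ ℓ_ν * t := by
      calc |ν x₁ j - ν x₂ j| = |(ν x₁ - ν x₂) j| := rfl
        _ ≤ ‖ν x₁ - ν x₂‖ := coord_abs_le _ _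
        _ ≤ ℓ_ν * t := hLip x₁ hx₁ x₂ hx₂
    rw [h1]
    calc |ν x₁ i * (ν x₁ j - ν x₂ j) + (ν x₁ i - ν x₂ i) * ν x₂ j|
        ≤ |ν x₁ i| * |ν x₁ j - ν x₂ j| + |ν x₁ i - ν x₂ i| * |ν x₂ j| := by
          rw [← abs_mul, ← abs_mul]; exact abs_add_le _ _
      _ ≤ 1 * (ℓ_ν * t) + (ℓ_ν * t) * 1 := by
          gcongr <;> first
            | exact hcomp _ _ n1 | exact hcomp _ _ n2 | exact hcomp _ _ ny
            | assumption | positivity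
      _ = 2 * ℓ_ν * t := by ring
  have hq2 : |q₂| ≤ 3 * ℓ_ν * r := by
    have h1 : q₂ = ν x₂ i * (ν x₂ j - ν y j) + (ν x₂ i - ν y i) * ν y j := by
      rw [hq₂_def]; unfold normalProductKernel; ring
    have hdi : |ν x₂ i - ν y i| ≤ ℓ_ν * s := by
      calc |ν x₂ i - ν y i| = |(ν x₂ - ν y) i| := rfl
        _ ≤ ‖ν x₂ - ν y‖ := coord_abs_le _ _
        _ ≤ ℓ_ν * s := hLip x₂ hx₂ y hy
    have hdj : |ν x₂ j - ν y j| ≤ ℓ_ν * s := by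
      calc |ν x₂ j - ν y j| = |(ν x₂ - ν y) j| := rfl
        _ ≤ ‖ν x₂ - ν y‖ := coord_abs_le _ _
        _ ≤ ℓ_ν * s := hLip x₂ hx₂ y hy
    rw [h1]
    calc |ν x₂ i * (ν x₂ j - ν y j) + (ν x₂ i - ν y i) * ν y j|
        ≤ |ν x₂ i| * |ν x₂ j - ν y j| + |ν x₂ i - ν y i| * |ν y j| := by
          rw [← abs_mul, ← abs_mul]; exact abs_add_le _ _
      _ ≤ 1 * (ℓ_ν * s) + (ℓ_ν * s) * 1 := by
          gcongr <;> first
            | exact hcomp _ _ n1 | exact hcomp _ _ n2 | exact hcomp _ _ ny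
            | assumption | positivity
      _ = 2 * ℓ_ν * s := by ring
      _ ≤ 3 * ℓ_ν * r := by
          have := mul_le_mul_of_nonneg_left hs2 (by positivity : (0:ℝ) ≤ 2*ℓ_ν)
          linarith
  -- rewrite the kernels in terms of E₁, E₂
  set E₁ : ℝ := A₁/r^3 - 3*(F₁*G₁)/r^5 with hE₁_def
  set E₂ : ℝ := A₂/s^3 - 3*(F₂*G₂)/s^5 with hE₂_def
  have hπ : (1:ℝ) ≤ 4 * Real.pi := by linarith [Real.pi_gt_three]
  have hπ0 : (0:ℝ) < 4 * Real.pi := by linarith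
  have hP1 : laplaceHyperKernel ν x₁ y = E₁ / (4*Real.pi) := by
    unfold laplaceHyperKernel
    rw [hE₁_def, hA₁_def, hF₁_def, hG₁_def, ← hr_def]
    field_simp
  have hP2 : laplaceHyperKernel ν x₂ y = E₂ / (4*Real.pi) := by
    unfold laplaceHyperKernel
    rw [hE₂_def, hA₂_def, hF₂_def, hG₂_def, ← hs_def]
    field_simp
  rw [hP1, hP2]
  have hred : E₁/(4*Real.pi)*q₁ - E₂/(4*Real.pi)*q₂ = (E₁*q₁ - E₂*q₂)/(4*Real.pi) := by
    ring
  rw [hred, abs_div, abs_of_pos hπ0]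
  have hmain : |E₁*q₁ - E₂*q₂| ≤ (2*ℓ_ν*Cp + 3*ℓ_ν*Cd) * t / r^3 := by
    -- bound |E₁| * r^3
    have hE1' : |E₁| * r^3 ≤ Cp := by
      have h1 : |E₁| ≤ |A₁|/r^3 + 3*(|F₁| *|G₁|)/r^5 := by
        rw [hE₁_def]
        calc |A₁/r^3 - 3*(F₁*G₁)/r^5| ≤ |A₁/r^3| + |3*(F₁*G₁)/r^5| := abs_sub _ _
          _ = |A₁|/r^3 + 3*(|F₁| *|G₁|)/r^5 := by
              rw [abs_div, abs_div, abs_mul, abs_mul,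
                abs_of_pos (pow_pos hr 3), abs_of_pos (pow_pos hr 5),
                abs_of_pos (by norm_num : (0:ℝ) < 3)]
      have h2 : (|A₁|/r^3 + 3*(|F₁| *|G₁|)/r^5) * r^3 ≤ Cp := by
        have e1 : (|A₁|/r^3 + 3*(|F₁| *|G₁|)/r^5) * r^3 = |A₁| + 3*(|F₁| *|G₁|)/r^2 := by
          field_simp
        rw [e1]
        have h3 : 3*(|F₁| *|G₁|)/r^2 ≤ 3*((c_ν*r^2)*(c_ν*r^2))/r^2 := by
          gcongr
        have h4 : 3*((c_ν*r^2)*(c_ν*r^2))/r^2 = 3*c_ν^2*r^2 := by field_simp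
        have h5 : 3*c_ν^2*r^2 ≤ 12*c_ν^2*d^2 := by
          have := mul_le_mul_of_nonneg_left hr2 (by positivity : (0:ℝ) ≤ 3*c_ν^2)
          linarith [this]
        rw [hCp_def]; linarith [hA1]
      calc |E₁| * r^3 ≤ (|A₁|/r^3 + 3*(|F₁| *|G₁|)/r^5) * r^3 := by gcongr
        _ ≤ Cp := h2
    -- bound |E₁ - E₂| * r^4
    have hEd' : |E₁ - E₂| * r^4 ≤ Cd * t := by
      have hsplit : E₁ - E₂ = (A₁-A₂)/r^3 + A₂*(1/r^3 - 1/s^3)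
          - 3*((F₁-F₂)*G₁)/r^5 - 3*(F₂*(G₁-G₂))/r^5 - 3*(F₂*G₂)*(1/r^5 - 1/s^5) := by
        rw [hE₁_def, hE₂_def]; ring
      have habs : |E₁ - E₂| ≤ |(A₁-A₂)/r^3| + |A₂*(1/r^3 - 1/s^3)|
          + |3*((F₁-F₂)*G₁)/r^5| + |3*(F₂*(G₁-G₂))/r^5| + |3*(F₂*G₂)*(1/r^5 - 1/s^5)| := by
        rw [hsplit]
        calc |(A₁-A₂)/r^3 + A₂*(1/r^3 - 1/s^3) - 3*((F₁-F₂)*G₁)/r^5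
              - 3*(F₂*(G₁-G₂))/r^5 - 3*(F₂*G₂)*(1/r^5 - 1/s^5)|
            ≤ |(A₁-A₂)/r^3 + A₂*(1/r^3 - 1/s^3) - 3*((F₁-F₂)*G₁)/r^5
              - 3*(F₂*(G₁-G₂))/r^5| + |3*(F₂*G₂)*(1/r^5 - 1/s^5)| := abs_sub _ _
          _ ≤ |(A₁-A₂)/r^3 + A₂*(1/r^3 - 1/s^3) - 3*((F₁-F₂)*G₁)/r^5|
              + |3*(F₂*(G₁-G₂))/r^5| + |3*(F₂*G₂)*(1/r^5 - 1/s^5)| := by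
              gcongr; exact abs_sub _ _
          _ ≤ |(A₁-A₂)/r^3 + A₂*(1/r^3 - 1/s^3)| + |3*((F₁-F₂)*G₁)/r^5|
              + |3*(F₂*(G₁-G₂))/r^5| + |3*(F₂*G₂)*(1/r^5 - 1/s^5)| := by
              gcongr; exact abs_sub _ _
          _ ≤ |(A₁-A₂)/r^3| + |A₂*(1/r^3 - 1/s^3)| + |3*((F₁-F₂)*G₁)/r^5|
              + |3*(F₂*(G₁-G₂))/r^5| + |3*(F₂*G₂)*(1/r^5 - 1/s^5)| := by
              gcongr; exact abs_add_le _ _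
      have hT1 : |(A₁-A₂)/r^3| * r^4 ≤ 2*d*ℓ_ν*t := by
        have e1 : |(A₁-A₂)/r^3| * r^4 = |A₁-A₂| * r := by
          rw [abs_div, abs_of_pos (pow_pos hr 3)]; field_simp
        rw [e1]
        calc |A₁-A₂| * r ≤ (ℓ_ν*t) * (2*d) := by
              apply mul_le_mul hAd hr2d hr.le (by positivity)
          _ = 2*d*ℓ_ν*t := by ring
      have hT2 : |A₂*(1/r^3 - 1/s^3)| * r^4 ≤ 38*t := by
        have hx : |1/r^3 - 1/s^3| * r^4 ≤ 38*t := by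
          calc |1/r^3 - 1/s^3| * r^4 ≤ (38*t/r^4) * r^4 := by
                gcongr; exact inv_cube_diff r s t hr hs1 hs2 hts
            _ = 38*t := by field_simp
        rw [abs_mul]
        calc |A₂| * |1/r^3 - 1/s^3| * r^4 = |A₂| * (|1/r^3 - 1/s^3| * r^4) := by ring
          _ ≤ 1 * (38*t) := by
              apply mul_le_mul hA2 hx (by positivity) zero_le_one
          _ = 38*t := by ring
      have hT3 : |3*((F₁-F₂)*G₁)/r^5| * r^4 ≤ 6*d*c_ν*t := by
        have e1 : |3*((F₁-F₂)*G₁)/r^5| * r^4 = 3*(|F₁-F₂| *|G₁|)/r := by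
          rw [abs_div, abs_mul, abs_mul, abs_of_pos (pow_pos hr 5),
            abs_of_pos (by norm_num : (0:ℝ) < 3)]
          field_simp
        rw [e1]
        calc 3*(|F₁-F₂| *|G₁|)/r ≤ 3*(t*(c_ν*r^2))/r := by gcongr
          _ = 3*c_ν*t*r := by field_simp
          _ ≤ 6*d*c_ν*t := by
              have := mul_le_mul_of_nonneg_left hr2d (by positivity : (0:ℝ) ≤ 3*c_ν*t)
              linarith [this]
      have hT4 : |3*(F₂*(G₁-G₂))/r^5| * r^4 ≤ 27/2*d*c_ν*(2*d*ℓ_ν+1)*t := by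
        have e1 : |3*(F₂*(G₁-G₂))/r^5| * r^4 = 3*(|F₂| *|G₁-G₂|)/r := by
          rw [abs_div, abs_mul, abs_mul, abs_of_pos (pow_pos hr 5),
            abs_of_pos (by norm_num : (0:ℝ) < 3)]
          field_simp
        rw [e1]
        have h2 : 3*(|F₂| *|G₁-G₂|)/r ≤ 3*((c_ν*s^2)*(ℓ_ν*t*r + t))/r := by
          gcongr <;> positivity
        have h3 : 3*((c_ν*s^2)*(ℓ_ν*t*r + t))/r ≤ 27/2*d*c_ν*(2*d*ℓ_ν+1)*t := by
          rw [div_le_iff₀ hr]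
          have f1 : c_ν*s^2*(ℓ_ν*t*r + t) ≤ c_ν*(9/4*r^2)*(ℓ_ν*t*r + t) := by
            apply mul_le_mul_of_nonneg_right _ (by positivity)
            apply mul_le_mul_of_nonneg_left hbb hc.le
          have m1 : c_ν*ℓ_ν*t*r^2 ≤ c_ν*ℓ_ν*t*(4*d^2) := by
            apply mul_le_mul_of_nonneg_left hr2 (by positivity)
          have m1r : c_ν*ℓ_ν*t*r^2*r ≤ c_ν*ℓ_ν*t*(4*d^2)*r :=
            mul_le_mul_of_nonneg_right m1 hr.le
          have m2 : c_ν*t*r ≤ c_ν*t*(2*d) := by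
            apply mul_le_mul_of_nonneg_left hr2d (by positivity)
          have m2r : c_ν*t*r*r ≤ c_ν*t*(2*d)*r :=
            mul_le_mul_of_nonneg_right m2 hr.le
          linarith [f1, m1r, m2r]
        linarith
      have hT5 : |3*(F₂*G₂)*(1/r^5 - 1/s^5)| * r^4 ≤ 51273/2*d^2*c_ν^2*t := by
        have e1 : |3*(F₂*G₂)*(1/r^5 - 1/s^5)| * r^4
            = 3*(|F₂| *|G₂|)*(|1/r^5 - 1/s^5| * r^4) := by
          rw [abs_mul, abs_mul, abs_mul, abs_of_pos (by norm_num : (0:ℝ) < 3)]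
          ring
        rw [e1]
        have hy5 : |1/r^5 - 1/s^5| * r^4 ≤ 422*t/r^2 := by
          calc |1/r^5 - 1/s^5| * r^4 ≤ (422*t/r^6)*r^4 := by
                gcongr; exact inv_fifth_diff r s t hr hs1 hs2 hts
            _ = 422*t/r^2 := by field_simp
        have hfg : |F₂| *|G₂| ≤ (c_ν*s^2)*(c_ν*s^2) := by
          apply mul_le_mul hF2 hG2 (abs_nonneg _) (by positivity)
        calc 3*(|F₂| *|G₂|)*(|1/r^5 - 1/s^5| * r^4)
            ≤ 3*((c_ν*s^2)*(c_ν*s^2))*(422*t/r^2) := by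
              apply mul_le_mul _ hy5 (by positivity) (by positivity)
              apply mul_le_mul_of_nonneg_left hfg (by norm_num)
          _ = 1266*c_ν^2*s^4*t/r^2 := by field_simp; ring
          _ ≤ 51273/2*d^2*c_ν^2*t := by
              rw [div_le_iff₀ (by positivity : (0:ℝ) < r^2)]
              have m1 : 1266*c_ν^2*t*s^4 ≤ 1266*c_ν^2*t*(81/16*r^4) := by
                apply mul_le_mul_of_nonneg_left hs4g (by positivity)
              have m2 : c_ν^2*t*r^2*r^2 ≤ c_ν^2*t*r^2*(4*d^2) := by
                apply mul_le_mul_of_nonneg_left hr2 (by positivity)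
              have m3 : (0:ℝ) ≤ d^2*c_ν^2*t*r^2 := by positivity
              linarith [m1, m2, m3]
      calc |E₁ - E₂| * r^4 ≤ (|(A₁-A₂)/r^3| + |A₂*(1/r^3 - 1/s^3)|
            + |3*((F₁-F₂)*G₁)/r^5| + |3*(F₂*(G₁-G₂))/r^5|
            + |3*(F₂*G₂)*(1/r^5 - 1/s^5)|) * r^4 := by gcongr
        _ = |(A₁-A₂)/r^3| * r^4 + |A₂*(1/r^3 - 1/s^3)| * r^4 + |3*((F₁-F₂)*G₁)/r^5| * r^4
            + |3*(F₂*(G₁-G₂))/r^5| * r^4 + |3*(F₂*G₂)*(1/r^5 - 1/s^5)| * r^4 := by ring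
        _ ≤ 2*d*ℓ_ν*t + 38*t + 6*d*c_ν*t + 27/2*d*c_ν*(2*d*ℓ_ν+1)*t
            + 51273/2*d^2*c_ν^2*t := by linarith [hT1, hT2, hT3, hT4, hT5]
        _ = Cd * t := by rw [hCd_def]; ring
    -- combine
    rw [le_div_iff₀ (pow_pos hr 3)]
    have hsplitq : E₁*q₁ - E₂*q₂ = E₁*(q₁ - q₂) + (E₁ - E₂)*q₂ := by ring
    have habs2 : |E₁*q₁ - E₂*q₂| ≤ |E₁| *|q₁-q₂| + |E₁-E₂| *|q₂| := by
      rw [hsplitq]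
      calc |E₁*(q₁ - q₂) + (E₁ - E₂)*q₂| ≤ |E₁*(q₁-q₂)| + |(E₁-E₂)*q₂| := abs_add_le _ _
        _ = |E₁| *|q₁-q₂| + |E₁-E₂| *|q₂| := by rw [abs_mul, abs_mul]
    have t1 : |E₁| *|q₁-q₂| *r^3 ≤ Cp*(2*ℓ_ν*t) := by
      calc |E₁| *|q₁-q₂| *r^3 = (|E₁| *r^3)*|q₁-q₂| := by ring
        _ ≤ Cp*(2*ℓ_ν*t) := by
            apply mul_le_mul hE1' hqd (abs_nonneg _) (by positivity)
    have t2 : |E₁-E₂| *|q₂| *r^3 ≤ 3*ℓ_ν*(Cd*t) := by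
      apply le_of_mul_le_mul_right _ hr
      calc (|E₁-E₂| *|q₂| *r^3)*r = (|E₁-E₂| * r^4)*|q₂| := by ring
        _ ≤ (Cd*t)*(3*ℓ_ν*r) := by
            apply mul_le_mul hEd' hq2 (abs_nonneg _) (by positivity)
        _ = (3*ℓ_ν*(Cd*t))*r := by ring
    calc |E₁*q₁ - E₂*q₂| * r^3 ≤ (|E₁| *|q₁-q₂| + |E₁-E₂| *|q₂|) * r^3 := by gcongr
      _ = |E₁| *|q₁-q₂| *r^3 + |E₁-E₂| *|q₂| *r^3 := by ring
      _ ≤ Cp*(2*ℓ_ν*t) + 3*ℓ_ν*(Cd*t) := by linarith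
      _ = (2*ℓ_ν*Cp + 3*ℓ_ν*Cd) * t := by ring
  calc |E₁*q₁ - E₂*q₂| / (4*Real.pi) ≤ |E₁*q₁ - E₂*q₂| := by
        apply div_le_self (abs_nonneg _) hπ
    _ ≤ (2*ℓ_ν*Cp + 3*ℓ_ν*Cd) * t / r^3 := hmain
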